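/- Let q : ℝ → ℝ be a measurable function with q ≥ 0 and ∫_ℝ q(s) ds = 1, such that s ↦ s·q(s) is integrable, with mean s₀ := ∫_ℝ s·q(s) ds, and assume ∫_ℝ (s − s₀)²·q(s) ds < ∞. Define Ψ(v) := ∫_ℝ e^{iv(s−s₀)}·q(s) ds and assume that v ↦ (1 − Ψ(v))/v² is integrable on ℝ. Then for every K ∈ ℝ, ∫_ℝ max(s − K, 0)·q(s) ds = max(s₀ − K, 0) + (1/π) · ∫_0^∞ Re( e^{−iv(K − s₀)}·(1 − Ψ(v))/v² ) dv. -/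

import Mathlib

open MeasureTheory Set Filter Real



lemma one_sub_cos_nonneg (x : ℝ) : 0 ≤ 1 - Real.cos x := by
  have := Real.cos_le_one x; linarith

lemma one_sub_cos_le_two (x : ℝ) : 1 - Real.cos x ≤ 2 := by
  have := Real.neg_one_le_cos x; linarith

lemma one_sub_cos_le_sq (x : ℝ) : 1 - Real.cos x ≤ x ^ 2 / 2 := by
  have h1 : Real.cos x = 1 - 2 * Real.sin (x / 2) ^ 2 := by
    have := Real.cos_two_mul' (x / 2)
    have h2 := Real.sin_sq_add_cos_sq (x / 2)
    rw [show 2 * (x / 2) = x by ring] at this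
    linarith
  have h2 : |Real.sin (x / 2)| ≤ |x / 2| := Real.abs_sin_le_abs
  have h3 : Real.sin (x / 2) ^ 2 ≤ (x / 2) ^ 2 := by
    rw [← sq_abs, ← sq_abs (x / 2)]
    exact pow_le_pow_left₀ (abs_nonneg _) h2 2
  nlinarith

lemma lap_cos (t : ℝ) (ht : 0 < t) :
    ∫ v in Ioi (0:ℝ), (1 - Real.cos v) * Real.exp (-(t * v)) = 1 / t - t / (1 + t ^ 2) := by
  set F : ℝ → ℝ := fun v => Real.exp (-(t * v)) *
      (-(1 / t) + (Real.sin v - t * Real.cos v) * (-(1 / (1 + t ^ 2)))) with hF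
  have ht2 : (0:ℝ) < 1 + t ^ 2 := by positivity
  have he : ∀ v : ℝ, HasDerivAt (fun v => Real.exp (-(t * v))) (-t * Real.exp (-(t * v))) v := by
    intro v
    have h1 : HasDerivAt (fun v : ℝ => -(t * v)) (-t) v := by
      simpa using ((hasDerivAt_id v).const_mul (-t))
    refine ((Real.hasDerivAt_exp (-(t * v))).comp v h1).congr_deriv ?_
    ring
  have hderiv : ∀ v : ℝ, HasDerivAt F ((1 - Real.cos v) * Real.exp (-(t * v))) v := by
    intro v
    have hG : HasDerivAt (fun v => -(1 / t) + (Real.sin v - t * Real.cos v) * (-(1 / (1 + t ^ 2))))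
        ((Real.cos v - t * (-Real.sin v)) * (-(1 / (1 + t ^ 2)))) v :=
      (((Real.hasDerivAt_sin v).sub ((Real.hasDerivAt_cos v).const_mul t)).mul_const _).const_add _
    have := (he v).mul hG
    refine HasDerivAt.congr_deriv (f := F) this ?_
    field_simp
    ring
  have hint : IntegrableOn (fun v => (1 - Real.cos v) * Real.exp (-(t * v))) (Ioi 0) := by
    refine Integrable.mono' ((exp_neg_integrableOn_Ioi 0 ht).const_mul 2) ?_ ?_
    · exact (Continuous.aestronglyMeasurable (by continuity)).restrict
    · filter_upwards with v
      rw [Real.norm_eq_abs, abs_of_nonneg (mul_nonneg (one_sub_cos_nonneg v) (Real.exp_pos _).le)]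
      rw [neg_mul]
      exact mul_le_mul_of_nonneg_right (one_sub_cos_le_two v) (Real.exp_pos _).le
  have htend : Tendsto F atTop (nhds 0) := by
    have h0 : Tendsto (fun v : ℝ => Real.exp (-(t * v))) atTop (nhds 0) := by
      have : Tendsto (fun v : ℝ => t * v) atTop atTop :=
        Tendsto.const_mul_atTop ht tendsto_id
      exact Real.tendsto_exp_neg_atTop_nhds_zero.comp this
    refine h0.zero_mul_isBoundedUnder_le ?_
    refine isBoundedUnder_of ⟨1 / t + (1 + t) * (1 / (1 + t ^ 2)), fun v => ?_⟩
    have hs := Real.abs_sin_le_one v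
    have hc := Real.abs_cos_le_one v
    have : |Real.sin v - t * Real.cos v| ≤ 1 + t := by
      calc |Real.sin v - t * Real.cos v| ≤ |Real.sin v| + |t * Real.cos v| := abs_sub _ _
        _ ≤ 1 + t := by
            rw [abs_mul, abs_of_pos ht]
            have : t * |Real.cos v| ≤ t * 1 := by
              exact mul_le_mul_of_nonneg_left hc ht.le
            linarith
    simp only [Function.comp, Real.norm_eq_abs]
    calc |(-(1 / t) + (Real.sin v - t * Real.cos v) * (-(1 / (1 + t ^ 2))))|
        ≤ |(-(1 / t))| + |(Real.sin v - t * Real.cos v) * (-(1 / (1 + t ^ 2)))| := abs_add_le _ _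
      _ ≤ 1 / t + (1 + t) * (1 / (1 + t ^ 2)) := by
          rw [abs_neg, abs_mul, abs_neg, abs_of_pos (by positivity : (0:ℝ) < 1 / t),
            abs_of_pos (by positivity : (0:ℝ) < 1 / (1 + t ^ 2))]
          have := mul_le_mul_of_nonneg_right this (by positivity : (0:ℝ) ≤ 1 / (1 + t ^ 2))
          linarith
  have := integral_Ioi_of_hasDerivAt_of_tendsto' (fun v _ => hderiv v) hint htend
  rw [this]
  simp [hF]
  field_simp
  ring



lemma gamma_int (v : ℝ) (hv : 0 < v) :
    ∫ t in Ioi (0:ℝ), t * Real.exp (-(v * t)) = 1 / v ^ 2 := by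
  have h := Real.integral_rpow_mul_exp_neg_mul_Ioi (a := 2) two_pos hv
  have h2 : Real.Gamma 2 = 1 := by
    rw [show (2:ℝ) = 1 + 1 by norm_num, Real.Gamma_add_one one_ne_zero, Real.Gamma_one, mul_one]
  have h3 : (1 / v) ^ (2:ℝ) = 1 / v ^ 2 := by
    rw [show ((2:ℝ)) = ((2:ℕ):ℝ) by norm_num, Real.rpow_natCast, div_pow, one_pow]
  rw [h2, mul_one, h3] at h
  rw [← h]
  refine setIntegral_congr_fun measurableSet_Ioi fun t ht => ?_
  norm_num [Real.rpow_one]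

lemma aux1 (a : ℝ) : IntegrableOn (fun v => (1 - Real.cos (a * v)) / v ^ 2) (Ioi (0:ℝ)) := by
  have hmeas : Measurable fun v : ℝ => (1 - Real.cos (a * v)) / v ^ 2 :=
    (measurable_const.sub (Real.measurable_cos.comp (measurable_const_mul a))).div
      (measurable_id.pow_const 2)
  have h1 : IntegrableOn (fun v => (1 - Real.cos (a * v)) / v ^ 2) (Ioc (0:ℝ) 1) := by
    refine Integrable.mono'
      (integrableOn_const (C := a ^ 2 / 2) measure_Ioc_lt_top.ne)
      hmeas.aestronglyMeasurable.restrict ?_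
    · refine (ae_restrict_mem measurableSet_Ioc).mono fun v hv => ?_
      rw [Real.norm_eq_abs, abs_of_nonneg (div_nonneg (one_sub_cos_nonneg _) (by positivity))]
      rw [div_le_iff₀ (pow_pos hv.1 2)]
      calc 1 - Real.cos (a * v) ≤ (a * v) ^ 2 / 2 := one_sub_cos_le_sq _
        _ = a ^ 2 / 2 * v ^ 2 := by rw [mul_pow]; ring
  have h2 : IntegrableOn (fun v => (1 - Real.cos (a * v)) / v ^ 2) (Ioi (1:ℝ)) := by
    refine Integrable.mono' ((integrableOn_Ioi_rpow_of_lt (by norm_num : (-2:ℝ) < -1)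
      one_pos).const_mul 2) hmeas.aestronglyMeasurable.restrict ?_
    refine (ae_restrict_mem measurableSet_Ioi).mono fun v hv => ?_
    have hv0 : (0:ℝ) < v := lt_trans one_pos hv
    rw [Real.norm_eq_abs, abs_of_nonneg (div_nonneg (one_sub_cos_nonneg _) (by positivity))]
    rw [Real.rpow_neg hv0.le, show (2:ℝ) = ((2:ℕ):ℝ) by norm_num, Real.rpow_natCast]
    rw [div_le_iff₀ (by positivity : (0:ℝ) < v ^ 2), mul_assoc,
      inv_mul_cancel₀ (by positivity : (v:ℝ) ^ 2 ≠ 0), mul_one]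
    exact one_sub_cos_le_two _
  have := h1.union h2
  rwa [Ioc_union_Ioi_eq_Ioi (by norm_num : (0:ℝ) ≤ 1)] at this



lemma core_val : ∫ v in Ioi (0:ℝ), (1 - Real.cos v) / v ^ 2 = Real.pi / 2 := by
  set μ : Measure ℝ := volume.restrict (Ioi 0) with hμ
  set P : ℝ → ℝ → ℝ := fun v t => (1 - Real.cos v) * (t * Real.exp (-(t * v))) with hP
  have hPc : Continuous (Function.uncurry P) := by
    apply Continuous.mul
    · exact (continuous_const.sub (Real.continuous_cos.comp continuous_fst))
    · exact continuous_snd.mul ((continuous_snd.mul continuous_fst).neg.rexp)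
  have hPnn : ∀ v t, 0 ≤ t → 0 ≤ P v t := fun v t ht =>
    mul_nonneg (one_sub_cos_nonneg v) (mul_nonneg ht (Real.exp_pos _).le)
  -- fiberwise integrability in v for fixed t > 0
  have hfib : ∀ t : ℝ, 0 < t → IntegrableOn (fun v => P v t) (Ioi 0) := by
    intro t ht
    refine Integrable.mono' ((exp_neg_integrableOn_Ioi 0 ht).const_mul (2 * t))
      (Continuous.aestronglyMeasurable (by fun_prop)).restrict ?_
    filter_upwards with v
    rw [Real.norm_eq_abs, abs_of_nonneg (hPnn v t ht.le), neg_mul]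
    calc (1 - Real.cos v) * (t * Real.exp (-(t * v)))
        ≤ 2 * (t * Real.exp (-(t * v))) :=
          mul_le_mul_of_nonneg_right (one_sub_cos_le_two v)
            (mul_nonneg ht.le (Real.exp_pos _).le)
      _ = 2 * t * Real.exp (-(t * v)) := by ring
  -- value of the v-integral for fixed t > 0
  have hfibval : ∀ t : ℝ, 0 < t → ∫ v in Ioi (0:ℝ), P v t = (1 + t ^ 2)⁻¹ := by
    intro t ht
    have : ∀ v : ℝ, P v t = t * ((1 - Real.cos v) * Real.exp (-(t * v))) := fun v => by
      simp only [hP]; ring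
    rw [show (fun v => P v t) = fun v => t * ((1 - Real.cos v) * Real.exp (-(t * v))) from
      funext this, integral_const_mul, lap_cos t ht]
    field_simp
    ring
  have hprod : Integrable (Function.uncurry P) (μ.prod μ) := by
    rw [integrable_prod_iff' hPc.aestronglyMeasurable]
    constructor
    · rw [hμ]
      filter_upwards [ae_restrict_mem measurableSet_Ioi] with t ht
      exact hfib t ht
    · have : (fun t => ∫ v, ‖P v t‖ ∂μ) =ᵐ[μ] fun t => (1 + t ^ 2)⁻¹ := by
        rw [hμ]
        filter_upwards [ae_restrict_mem measurableSet_Ioi] with t ht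
        rw [← hfibval t ht]
        refine integral_congr_ae (ae_restrict_of_ae ?_)
        filter_upwards with v
        rw [Real.norm_eq_abs, abs_of_nonneg (hPnn v t (le_of_lt ht))]
      exact (integrable_inv_one_add_sq.restrict).congr this.symm
  have hswap := integral_integral_swap hprod
  -- left side: ∫ v, ∫ t, P v t = ∫ v, (1 - cos v)/v²
  have hleft : ∫ v, (∫ t, P v t ∂μ) ∂μ = ∫ v in Ioi (0:ℝ), (1 - Real.cos v) / v ^ 2 := by
    rw [hμ]
    refine setIntegral_congr_fun measurableSet_Ioi fun v hv => ?_
    have : ∀ t : ℝ, P v t = (1 - Real.cos v) * (t * Real.exp (-(v * t))) := fun t => by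
      simp only [hP, mul_comm t v]
    rw [show (fun t => P v t) = fun t => (1 - Real.cos v) * (t * Real.exp (-(v * t))) from
      funext this, integral_const_mul, gamma_int v hv]
    rw [mul_one_div]
  have hright : ∫ t, (∫ v, P v t ∂μ) ∂μ = Real.pi / 2 := by
    have : ∫ t, (∫ v, P v t ∂μ) ∂μ = ∫ t in Ioi (0:ℝ), (1 + t ^ 2)⁻¹ := by
      rw [hμ]
      exact setIntegral_congr_fun measurableSet_Ioi fun t ht => hfibval t ht
    rw [this, integral_Ioi_inv_one_add_sq, Real.arctan_zero, sub_zero]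
  rw [← hleft, hswap, hright]

lemma aux2 (a : ℝ) :
    ∫ v in Ioi (0:ℝ), (1 - Real.cos (a * v)) / v ^ 2 = Real.pi * |a| / 2 := by
  rcases eq_or_ne a 0 with rfl | ha
  · simp
  · have hb : 0 < |a| := abs_pos.mpr ha
    have h1 : ∀ v ∈ Ioi (0:ℝ), (1 - Real.cos (a * v)) / v ^ 2 =
        |a| ^ 2 * ((1 - Real.cos (|a| * v)) / (|a| * v) ^ 2) := by
      intro v hv
      have hv0 : (0:ℝ) < v := hv
      have : Real.cos (a * v) = Real.cos (|a| * v) := by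
        rcases abs_choice a with h | h
        · rw [h]
        · rw [h, neg_mul, Real.cos_neg]
      rw [this, mul_pow]
      field_simp
    rw [setIntegral_congr_fun measurableSet_Ioi h1, integral_const_mul]
    have := integral_comp_mul_left_Ioi (fun x => (1 - Real.cos x) / x ^ 2) 0 hb
    rw [mul_zero] at this
    rw [this, core_val, smul_eq_mul]
    field_simp [sq_abs]



lemma max_zero_eq (x : ℝ) : max x 0 = (x + |x|) / 2 := by
  rcases le_or_gt 0 x with h | h
  · rw [max_eq_left h, abs_of_nonneg h]; ring
  · rw [max_eq_right h.le, abs_of_neg h]; ring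

theorem carr_madan_call_pricing_formula
    (q : ℝ → ℝ) (hq_meas : Measurable q) (hq_nonneg : ∀ s, 0 ≤ q s)
    (hq_prob : ∫ s, q s = 1)
    (hq_mean : Integrable (fun s => s * q s))
    (s₀ : ℝ) (hs₀ : s₀ = ∫ s, s * q s)
    (hvar : Integrable (fun s => (s - s₀) ^ 2 * q s))
    (Ψ : ℝ → ℂ)
    (hΨ : ∀ v : ℝ, Ψ v = ∫ s : ℝ, Complex.exp (Complex.I * (v : ℂ) * ((s : ℂ) - (s₀ : ℂ))) * ((q s : ℝ) : ℂ))
    (hΨ_int : Integrable (fun v : ℝ => (1 - Ψ v) / (v : ℂ) ^ 2))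
    (K : ℝ) :
    ∫ s, max (s - K) 0 * q s =
      max (s₀ - K) 0 + (1 / Real.pi) *
        ∫ v in Set.Ioi (0 : ℝ),
          (Complex.exp (-Complex.I * (v : ℂ) * ((K : ℂ) - (s₀ : ℂ))) * (1 - Ψ v) / (v : ℂ) ^ 2).re := by
  -- q is integrable
  have hq_int : Integrable q := by
    by_contra h
    rw [integral_undef h] at hq_prob
    norm_num at hq_prob
  -- |s - K| * q is integrable
  have habs : Integrable (fun s => |s - K| * q s) := by
    refine Integrable.mono' (hq_mean.abs.add (hq_int.const_mul |K|))
      (((measurable_id.sub_const K).abs.mul hq_meas)).aestronglyMeasurable ?_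
    filter_upwards with s
    rw [Real.norm_eq_abs, abs_of_nonneg (mul_nonneg (abs_nonneg _) (hq_nonneg s))]
    have h1 : |s - K| ≤ |s| + |K| := abs_sub _ _
    have h2 : |s - K| * q s ≤ (|s| + |K|) * q s :=
      mul_le_mul_of_nonneg_right h1 (hq_nonneg s)
    calc |s - K| * q s ≤ (|s| + |K|) * q s := h2
      _ = |s| * q s + |K| * q s := by ring
      _ ≤ |s * q s| + |K| * q s := by
          rw [abs_mul, abs_of_nonneg (hq_nonneg s)]
  set A : ℝ := ∫ s, |s - K| * q s with hA
  -- the kernel B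
  set B : ℝ → ℝ → ℝ := fun v s => (1 - Real.cos ((s - K) * v)) / v ^ 2 * q s with hB
  have hBnn : ∀ v s, 0 ≤ B v s := fun v s =>
    mul_nonneg (div_nonneg (one_sub_cos_nonneg _) (sq_nonneg v)) (hq_nonneg s)
  have hBv : ∀ s, IntegrableOn (fun v => B v s) (Ioi (0:ℝ)) := fun s =>
    (aux1 (s - K)).mul_const (q s)
  have hBvval : ∀ s, ∫ v in Ioi (0:ℝ), B v s = Real.pi * |s - K| / 2 * q s := by
    intro s
    rw [hB]
    rw [integral_mul_const, aux2 (s - K)]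
  have hBmeas : Measurable (Function.uncurry B) := by
    apply Measurable.mul
    · exact (measurable_const.sub (Real.measurable_cos.comp
        ((measurable_snd.sub measurable_const).mul measurable_fst))).div
        (measurable_fst.pow_const 2)
    · exact hq_meas.comp measurable_snd
  have hBprod : Integrable (Function.uncurry B)
      ((volume.restrict (Ioi (0:ℝ))).prod volume) := by
    rw [integrable_prod_iff' hBmeas.aestronglyMeasurable]
    constructor
    · exact ae_of_all _ fun s => hBv s
    · refine (habs.const_mul (Real.pi / 2)).congr (ae_of_all _ fun s => ?_)
      show Real.pi / 2 * (|s - K| * q s) = ∫ v in Ioi (0:ℝ), ‖B v s‖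
      rw [show (fun v => ‖B v s‖) = fun v => B v s from
        funext fun v => by rw [Real.norm_eq_abs, abs_of_nonneg (hBnn v s)]]
      rw [hBvval s]; ring
  have hswap := integral_integral_swap hBprod
  have hc2_int : Integrable (fun v => ∫ s, B v s) (volume.restrict (Ioi (0:ℝ))) := by
    have := hBprod.integral_prod_left
    exact this
  have hc2_val : ∫ v in Ioi (0:ℝ), (∫ s, B v s) = Real.pi / 2 * A := by
    rw [hswap]
    rw [show (fun s => ∫ v in Ioi (0:ℝ), B v s) =
        fun s => Real.pi / 2 * (|s - K| * q s) from
      funext fun s => by rw [hBvval s]; ring]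
    rw [integral_const_mul, hA]
  -- pointwise identity for the integrand
  have hpt : ∀ v ∈ Ioi (0:ℝ),
      (Complex.exp (-Complex.I * (v : ℂ) * ((K : ℂ) - (s₀ : ℂ))) * (1 - Ψ v) / (v : ℂ) ^ 2).re =
        -((1 - Real.cos ((K - s₀) * v)) / v ^ 2) + ∫ s, B v s := by
    intro v hv
    have hv0 : (0:ℝ) < v := hv
    -- the integrand of Ψ is integrable
    have hmE : Measurable fun s : ℝ =>
        Complex.exp (Complex.I * (v : ℂ) * ((s : ℂ) - (s₀ : ℂ))) * ((q s : ℝ) : ℂ) := by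
      apply Measurable.mul
      · exact Complex.measurable_exp.comp
          (((Complex.measurable_ofReal.sub measurable_const).const_mul (Complex.I * v)))
      · exact Complex.measurable_ofReal.comp hq_meas
    -- generic facts about integrands of the form exp(r*I) * q
    have hnorm : ∀ (r : ℝ) (s : ℝ),
        ‖Complex.exp (((r : ℝ) : ℂ) * Complex.I) * ((q s : ℝ) : ℂ)‖ = q s := by
      intro r s
      rw [norm_mul, Complex.norm_exp,
        Complex.norm_of_nonneg (hq_nonneg s)]
      simp [Complex.mul_re]
    set G : ℝ → ℂ := fun s =>
      Complex.exp ((((s - K) * v : ℝ) : ℂ) * Complex.I) * ((q s : ℝ) : ℂ) with hGdef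
    have hG_meas : Measurable G := by
      apply Measurable.mul
      · exact Complex.measurable_exp.comp
          ((Complex.measurable_ofReal.comp ((measurable_id.sub_const K).mul_const v)).mul_const
            Complex.I)
      · exact Complex.measurable_ofReal.comp hq_meas
    have hG_int : Integrable G := by
      refine Integrable.mono' hq_int hG_meas.aestronglyMeasurable
        (ae_of_all _ fun s => le_of_eq (hnorm _ s))
    have hE_int : Integrable fun s : ℝ =>
        Complex.exp (Complex.I * (v : ℂ) * ((s : ℂ) - (s₀ : ℂ))) * ((q s : ℝ) : ℂ) := by
      refine Integrable.mono' hq_int hmE.aestronglyMeasurable (ae_of_all _ fun s => ?_)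
      rw [show Complex.I * (v : ℂ) * ((s : ℂ) - (s₀ : ℂ)) =
        (((s - s₀) * v : ℝ) : ℂ) * Complex.I by push_cast; ring]
      exact le_of_eq (hnorm _ s)
    -- step 1 : the numerator as an integral
    have step1 : Complex.exp (-Complex.I * (v : ℂ) * ((K : ℂ) - (s₀ : ℂ))) * (1 - Ψ v) =
        Complex.exp (-Complex.I * (v : ℂ) * ((K : ℂ) - (s₀ : ℂ))) - ∫ s, G s := by
      rw [hΨ v, mul_sub, mul_one]
      congr 1
      rw [← integral_const_mul]
      refine integral_congr_ae (ae_of_all _ fun s => ?_)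
      show Complex.exp (-Complex.I * (v : ℂ) * ((K : ℂ) - (s₀ : ℂ))) *
          (Complex.exp (Complex.I * (v : ℂ) * ((s : ℂ) - (s₀ : ℂ))) * ((q s : ℝ) : ℂ)) = G s
      rw [hGdef, ← mul_assoc, ← Complex.exp_add]
      congr 2
      push_cast
      ring
    -- step 2 : take real parts
    have hre : (∫ s, G s).re = ∫ s, Real.cos ((s - K) * v) * q s := by
      have h := (integral_re hG_int).symm
      simp only [RCLike.re_to_complex] at h
      rw [h]
      refine integral_congr_ae (ae_of_all _ fun s => ?_)
      rw [hGdef]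
      simp only
      rw [mul_comm (Complex.exp _) _, Complex.re_ofReal_mul, Complex.exp_ofReal_mul_I_re]
      ring
    have hcos_int : Integrable fun s => Real.cos ((s - K) * v) * q s := by
      refine Integrable.mono' hq_int
        ((Real.measurable_cos.comp ((measurable_id.sub_const K).mul_const v)).mul
          hq_meas).aestronglyMeasurable (ae_of_all _ fun s => ?_)
      rw [Real.norm_eq_abs, abs_mul, abs_of_nonneg (hq_nonneg s)]
      exact mul_le_of_le_one_left (hq_nonneg s) (Real.abs_cos_le_one _)
    have hcosval : ∫ s, Real.cos ((s - K) * v) * q s =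
        1 - ∫ s, (1 - Real.cos ((s - K) * v)) * q s := by
      rw [show (fun s => (1 - Real.cos ((s - K) * v)) * q s) =
          fun s => q s - Real.cos ((s - K) * v) * q s from funext fun s => by ring,
        integral_sub hq_int hcos_int, hq_prob]
      ring
    have hBval : ∫ s, B v s = (∫ s, (1 - Real.cos ((s - K) * v)) * q s) / v ^ 2 := by
      rw [show (fun s => B v s) = fun s => ((1 - Real.cos ((s - K) * v)) * q s) / v ^ 2 from
        funext fun s => by rw [hB]; ring, integral_div]
    rw [step1, show ((v : ℂ)) ^ 2 = ((v ^ 2 : ℝ) : ℂ) by push_cast; ring,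
      Complex.div_ofReal_re, Complex.sub_re,
      show -Complex.I * (v : ℂ) * ((K : ℂ) - (s₀ : ℂ)) =
        (((-((K - s₀) * v) : ℝ)) : ℂ) * Complex.I by push_cast; ring,
      Complex.exp_ofReal_mul_I_re, Real.cos_neg, hre, hcosval, hBval]
    ring
  -- value of the outer integral
  have hI : (∫ v in Ioi (0:ℝ),
      (Complex.exp (-Complex.I * (v : ℂ) * ((K : ℂ) - (s₀ : ℂ))) * (1 - Ψ v) / (v : ℂ) ^ 2).re) =
      -(Real.pi * |K - s₀| / 2) + Real.pi / 2 * A := by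
    have h1 : IntegrableOn (fun x => -((1 - Real.cos ((K - s₀) * x)) / x ^ 2)) (Ioi (0:ℝ)) :=
      (aux1 (K - s₀)).neg
    rw [setIntegral_congr_fun measurableSet_Ioi hpt,
      integral_add h1 hc2_int, integral_neg, aux2 (K - s₀), hc2_val]
  have hsubint : Integrable fun s => (s - K) * q s := by
    refine (hq_mean.sub (hq_int.const_mul K)).congr (ae_of_all _ fun s => ?_)
    simp only [Pi.sub_apply]
    ring
  have hsubval : ∫ s, (s - K) * q s = s₀ - K := by
    rw [show (fun s => (s - K) * q s) = fun s => s * q s - K * q s from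
      funext fun s => by ring, integral_sub hq_mean (hq_int.const_mul K),
      integral_const_mul, hq_prob, ← hs₀]
    ring
  have hLHS : ∫ s, max (s - K) 0 * q s = ((s₀ - K) + A) / 2 := by
    rw [show (fun s => max (s - K) 0 * q s) =
        fun s => ((s - K) * q s + |s - K| * q s) / 2 from
      funext fun s => by rw [max_zero_eq]; ring,
      integral_div, integral_add hsubint habs, hsubval, ← hA]
  rw [hLHS, hI, max_zero_eq (s₀ - K), abs_sub_comm K s₀]
  field_simp
  ring
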